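/- Let F be a positive definite symmetric n×n matrix, η > 0, G, H, σ ≥ 0, and f : ℝⁿ → ℝ differentiable with ‖∇f(θᵏ)‖ ≤ G. Suppose C is a closed convex set with diameter at most H, θᵏ ∈ C, σ₁(F) ≤ σ (largest singular value), and θ⁺ is the F-norm projection of θᵏ − η F⁻¹∇f(θᵏ) onto C. Then for all θ ∈ C: ∇f(θᵏ)ᵀ(θ − θᵏ) ≥ −(G + Hσ/η)‖θ⁺ − θᵏ‖. -/

import Mathlib

open scoped RealInnerProductSpace
set_option maxHeartbeats 1000000

theorem stmt_8 {n : ℕ} (F : Matrix (Fin n) (Fin n) ℝ) (hF : F.PosDef)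
    (η G H σ : ℝ) (hη : 0 < η) (hG : 0 ≤ G) (hH : 0 ≤ H) (hσ : 0 ≤ σ)
    (f : EuclideanSpace ℝ (Fin n) → ℝ) (gf : EuclideanSpace ℝ (Fin n))
    (θk : EuclideanSpace ℝ (Fin n)) (hgrad : HasGradientAt f gf θk) (hgf : ‖gf‖ ≤ G)
    (C : Set (EuclideanSpace ℝ (Fin n))) (hcl : IsClosed C) (hconv : Convex ℝ C)
    (hdiam : ∀ x ∈ C, ∀ y ∈ C, ‖x - y‖ ≤ H) (hθk : θk ∈ C)
    (hσ1 : ‖Matrix.toEuclideanCLM (𝕜 := ℝ) F‖ ≤ σ)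
    (θplus : EuclideanSpace ℝ (Fin n)) (hmem : θplus ∈ C)
    (hmin : ∀ θ' ∈ C,
      ⟪(θk - η • (Matrix.toEuclideanLin F⁻¹ gf)) - θplus,
        Matrix.toEuclideanLin F ((θk - η • (Matrix.toEuclideanLin F⁻¹ gf)) - θplus)⟫
        ≤ ⟪(θk - η • (Matrix.toEuclideanLin F⁻¹ gf)) - θ',
            Matrix.toEuclideanLin F ((θk - η • (Matrix.toEuclideanLin F⁻¹ gf)) - θ')⟫) :
    ∀ θ ∈ C, ⟪gf, θ - θk⟫ ≥ -(G + H * σ / η) * ‖θplus - θk‖ := by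
  intro θ hθ
  set A := Matrix.toEuclideanLin F with hA
  set z := θk - η • (Matrix.toEuclideanLin F⁻¹ gf) with hz
  have hsym : ∀ x y, ⟪A x, y⟫ = ⟪x, A y⟫ :=
    (Matrix.isHermitian_iff_isSymmetric.mp hF.isHermitian)
  -- variational inequality
  have VI : ⟪z - θplus, A (θ - θplus)⟫ ≤ 0 := by
    set u := z - θplus with hu
    set w := θ - θplus with hw
    have key : ∀ t : ℝ, 0 < t → t ≤ 1 → ⟪u, A w⟫ ≤ t / 2 * ⟪w, A w⟫ := by
      intro t ht ht1
      have hmemθ' : θplus + t • w ∈ C := by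
        have : θplus + t • w = (1 - t) • θplus + t • θ := by
          rw [hw]; module
        rw [this]
        exact hconv hmem hθ (by linarith) ht.le (by ring)
      have h := hmin _ hmemθ'
      have hzz : z - (θplus + t • w) = u - t • w := by rw [hu]; abel
      rw [hzz] at h
      have h1 : ⟪w, A u⟫ = ⟪u, A w⟫ := by rw [real_inner_comm, hsym]
      have expand : ⟪u - t • w, A (u - t • w)⟫
          = ⟪u, A u⟫ - 2 * t * ⟪u, A w⟫ + t ^ 2 * ⟪w, A w⟫ := by
        simp only [map_sub, map_smul, inner_sub_left, inner_sub_right,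
          real_inner_smul_left, real_inner_smul_right]
        nlinarith [h1]
      rw [expand] at h
      nlinarith
    by_contra hcon
    push_neg at hcon
    set a := ⟪u, A w⟫
    set c := ⟪w, A w⟫
    rcases le_or_gt c 0 with hc | hc
    · have := key 1 one_pos le_rfl
      nlinarith
    · have htpos : 0 < min 1 (a / c) := lt_min one_pos (div_pos hcon hc)
      have h0 := key _ htpos (min_le_left _ _)
      have h2 : min 1 (a / c) ≤ a / c := min_le_right _ _
      have h5 : min 1 (a / c) / 2 * c ≤ (a / c) / 2 * c := by
        apply mul_le_mul_of_nonneg_right _ hc.le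
        linarith
      have h6 : (a / c) / 2 * c = a / 2 := by field_simp
      linarith
  -- F * F⁻¹ = 1 applied to gf
  have hAinv : A (Matrix.toEuclideanLin F⁻¹ gf) = gf := by
    rw [hA]
    simp [Matrix.toEuclideanLin_apply, Matrix.mulVec_mulVec,
      Matrix.mul_nonsing_inv _ (Matrix.isUnit_iff_isUnit_det F |>.mp hF.isUnit)]
  -- decompose VI
  have hdec : ⟪z - θplus, A (θ - θplus)⟫
      = ⟪θk - θplus, A (θ - θplus)⟫ - η * ⟪gf, θ - θplus⟫ := by
    have : z - θplus = (θk - θplus) - η • (Matrix.toEuclideanLin F⁻¹ gf) := by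
      rw [hz]; abel
    rw [this, inner_sub_left, real_inner_smul_left,
      ← hsym ((Matrix.toEuclideanLin F⁻¹) gf) (θ - θplus), hAinv]
  rw [hdec] at VI
  -- norm bounds
  have hN : ‖θk - θplus‖ = ‖θplus - θk‖ := norm_sub_rev _ _
  have hAop : ‖A (θ - θplus)‖ ≤ σ * ‖θ - θplus‖ := by
    have h1 := (Matrix.toEuclideanCLM (𝕜 := ℝ) F).le_opNorm (θ - θplus)
    have h2 : (Matrix.toEuclideanCLM (𝕜 := ℝ) F) (θ - θplus) = A (θ - θplus) :=
      DFunLike.congr_fun (Matrix.coe_toEuclideanCLM_eq_toEuclideanLin (A := F)) (θ - θplus)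
    rw [h2] at h1
    exact h1.trans (mul_le_mul_of_nonneg_right hσ1 (norm_nonneg _))
  have hwH : ‖θ - θplus‖ ≤ H := hdiam θ hθ θplus hmem
  have bound1 : ⟪θk - θplus, A (θ - θplus)⟫ ≥ -(σ * H * ‖θplus - θk‖) := by
    have h3 := abs_real_inner_le_norm (θk - θplus) (A (θ - θplus))
    have h4 : ‖θk - θplus‖ * ‖A (θ - θplus)‖ ≤ ‖θplus - θk‖ * (σ * H) := by
      rw [hN]
      have : ‖A (θ - θplus)‖ ≤ σ * H := hAop.trans (mul_le_mul_of_nonneg_left hwH hσ)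
      exact mul_le_mul_of_nonneg_left this (norm_nonneg _)
    have := abs_le.mp (h3.trans h4)
    linarith [this.1]
  have bound2 : ⟪gf, θplus - θk⟫ ≥ -(G * ‖θplus - θk‖) := by
    have h3 := abs_real_inner_le_norm gf (θplus - θk)
    have h4 : ‖gf‖ * ‖θplus - θk‖ ≤ G * ‖θplus - θk‖ :=
      mul_le_mul_of_nonneg_right hgf (norm_nonneg _)
    have := abs_le.mp (h3.trans h4)
    linarith [this.1]
  have hsplit : ⟪gf, θ - θk⟫ = ⟪gf, θ - θplus⟫ + ⟪gf, θplus - θk⟫ := by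
    rw [← inner_add_right]; norm_num
  rw [ge_iff_le, ← mul_le_mul_iff_right₀ hη]
  have hηne : η ≠ 0 := hη.ne'
  have e1 : η * (-(G + H * σ / η) * ‖θplus - θk‖)
      = -(η * G * ‖θplus - θk‖) + -(σ * H * ‖θplus - θk‖) := by
    field_simp; ring
  rw [e1, hsplit, mul_add]
  have b2' : η * ⟪gf, θplus - θk⟫ ≥ η * (-(G * ‖θplus - θk‖)) :=
    mul_le_mul_of_nonneg_left bound2 hη.le
  have b1' : η * ⟪gf, θ - θplus⟫ ≥ -(σ * H * ‖θplus - θk‖) := by linarith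
  nlinarith
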